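/- Let G be the inverse limit of a surjective inverse system of finite groups {P_i}. Then NCC(G) = sup_i NCC(P_i). In particular, for any profinite group G, NCC(G) is the supremum of NCC(P) over all finite continuous quotients P of G. -/

import Mathlib

/-- `CC G Φ`: the smallest number of cyclic subgroups of `G` whose `Φ`-orbits cover `G`. -/
noncomputable def CC (G Φ : Type*) [Group G] [Group Φ] [MulDistribMulAction Φ G] : ℕ∞ :=
  sInf {n : ℕ∞ | ∃ s : Finset G, (s.card : ℕ∞) = n ∧
    ∀ x : G, ∃ g ∈ s, ∃ φ : Φ, x ∈ Subgroup.zpowers (φ • g)}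

/-- `NCC G`: the smallest number of cyclic subgroups of `G` whose conjugacy classes cover
`G`. (For finite groups this agrees with the profinite normal procyclic covering number.) -/
noncomputable def NCC (G : Type*) [Group G] : ℕ∞ := CC G (ConjAct G)

/-- `NCCtop G`: for a topological group `G`, the smallest number of closed procyclic
subgroups of `G` whose conjugacy classes cover `G` (a procyclic subgroup is the closure of
`Subgroup.zpowers g`, and its conjugates are the closures of `Subgroup.zpowers (h*g*h⁻¹)`). -/
noncomputable def NCCtop (G : Type*) [Group G] [TopologicalSpace G] : ℕ∞ :=
  sInf {n : ℕ∞ | ∃ s : Finset G, (s.card : ℕ∞) = n ∧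
    ∀ x : G, ∃ g ∈ s, ∃ h : G,
      x ∈ closure ((Subgroup.zpowers (h * g * h⁻¹) : Subgroup G) : Set G)}

/-- Let `G` be the inverse limit of a surjective inverse system of finite groups `{P i}`
(realized as the subgroup of compatible tuples in `Π i, P i`, with the product of the
discrete topologies). Then `NCC(G) = ⨆ i, NCC(P i)`. In particular, for any profinite
group `H`, `NCC(H)` is the supremum of `NCC(P)` over all finite continuous quotients `P`
of `H` (i.e. quotients by open normal subgroups). -/
lemma NCC_eq (G : Type*) [Group G] : NCC G =
    sInf {n : ℕ∞ | ∃ s : Finset G, (s.card : ℕ∞) = n ∧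
      ∀ x : G, ∃ g ∈ s, ∃ h : G, x ∈ Subgroup.zpowers (h * g * h⁻¹)} := by
  unfold NCC CC
  apply congrArg sInf
  ext n
  constructor
  · rintro ⟨s, hs, hc⟩
    refine ⟨s, hs, fun x => ?_⟩
    obtain ⟨g, hg, φ, hx⟩ := hc x
    exact ⟨g, hg, ConjAct.ofConjAct φ, by rwa [← ConjAct.smul_def]⟩
  · rintro ⟨s, hs, hc⟩
    refine ⟨s, hs, fun x => ?_⟩
    obtain ⟨g, hg, h, hx⟩ := hc x
    exact ⟨g, hg, ConjAct.toConjAct h, by rwa [ConjAct.smul_def, ConjAct.ofConjAct_toConjAct]⟩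

lemma NCCtop_eq_NCC (G : Type*) [Group G] [TopologicalSpace G] [DiscreteTopology G] :
    NCCtop G = NCC G := by
  rw [NCC_eq, NCCtop]
  apply congrArg sInf
  ext n
  simp only [closure_discrete, SetLike.mem_coe]

lemma NCCtop_le (G : Type*) [Group G] [TopologicalSpace G] (s : Finset G)
    (hc : ∀ x : G, ∃ g ∈ s, ∃ h : G,
      x ∈ closure ((Subgroup.zpowers (h * g * h⁻¹) : Subgroup G) : Set G)) :
    NCCtop G ≤ s.card := sInf_le ⟨s, rfl, hc⟩

lemma NCC_le (G : Type*) [Group G] (s : Finset G)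
    (hc : ∀ x : G, ∃ g ∈ s, ∃ h : G, x ∈ Subgroup.zpowers (h * g * h⁻¹)) :
    NCC G ≤ s.card := by
  rw [NCC_eq]; exact sInf_le ⟨s, rfl, hc⟩

lemma NCC_exists_cover {G : Type*} [Group G] [Finite G] {n : ℕ} (hn : NCC G ≤ n) :
    ∃ s : Finset G, s.card ≤ n ∧
      ∀ x : G, ∃ g ∈ s, ∃ h : G, x ∈ Subgroup.zpowers (h * g * h⁻¹) := by
  rw [NCC_eq] at hn
  have hne : {m : ℕ∞ | ∃ s : Finset G, (s.card : ℕ∞) = m ∧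
      ∀ x : G, ∃ g ∈ s, ∃ h : G, x ∈ Subgroup.zpowers (h * g * h⁻¹)}.Nonempty := by
    letI := Fintype.ofFinite G
    exact ⟨_, Finset.univ, rfl, fun x => ⟨x, Finset.mem_univ x, 1, by
      simpa using Subgroup.mem_zpowers x⟩⟩
  have hlt : sInf {m : ℕ∞ | ∃ s : Finset G, (s.card : ℕ∞) = m ∧
      ∀ x : G, ∃ g ∈ s, ∃ h : G, x ∈ Subgroup.zpowers (h * g * h⁻¹)} < (n : ℕ∞) + 1 :=
    lt_of_le_of_lt hn ((ENat.lt_add_one_iff (by simp)).mpr le_rfl)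
  obtain ⟨m, ⟨s, hs, hc⟩, hm⟩ := sInf_lt_iff.mp hlt
  refine ⟨s, ?_, hc⟩
  have := (ENat.lt_add_one_iff (m := m) (by simp)).mp hm
  rw [← hs] at this
  exact_mod_cast this

/-- extract a covering family from `NCCtop` when finite -/
lemma NCCtop_exists_cover {G : Type*} [Group G] [TopologicalSpace G] {n : ℕ}
    (hn : NCCtop G ≤ n) :
    ∃ s : Finset G, s.card ≤ n ∧
      ∀ x : G, ∃ g ∈ s, ∃ h : G,
        x ∈ closure ((Subgroup.zpowers (h * g * h⁻¹) : Subgroup G) : Set G) := by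
  have hlt : NCCtop G < (n : ℕ∞) + 1 :=
    lt_of_le_of_lt hn ((ENat.lt_add_one_iff (by simp)).mpr le_rfl)
  rw [NCCtop] at hlt
  obtain ⟨m, ⟨s, hs, hc⟩, hm⟩ := sInf_lt_iff.mp hlt
  refine ⟨s, ?_, hc⟩
  have := (ENat.lt_add_one_iff (m := m) (by simp)).mp hm
  rw [← hs] at this
  exact_mod_cast this

open CategoryTheory in
lemma exists_section' {J : Type*} [Preorder J] [IsDirected J (· ≤ ·)]
    {Q : J → Type*} [∀ i, Finite (Q i)] [∀ i, Nonempty (Q i)]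
    (g : ∀ ⦃i j : J⦄, i ≤ j → Q j → Q i)
    (hid : ∀ (i : J) (x : Q i), g (le_refl i) x = x)
    (hcomp : ∀ ⦃i j k : J⦄ (hij : i ≤ j) (hjk : j ≤ k) (x : Q k),
      g hij (g hjk x) = g (hij.trans hjk) x) :
    ∃ x : ∀ i, Q i, ∀ ⦃i j : J⦄ (hij : i ≤ j), g hij (x j) = x i := by
  let F : Jᵒᵖ ⥤ Type _ :=
    { obj := fun j => Q j.unop
      map := fun {a b} φ => TypeCat.ofHom (g (leOfHom φ.unop))
      map_id := fun a => by ext x; exact hid a.unop x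
      map_comp := fun {a b c} φ ψ => by ext x; exact (hcomp _ _ x).symm }
  haveI : ∀ j : Jᵒᵖ, Finite (F.obj j) := fun j => inferInstanceAs (Finite (Q j.unop))
  haveI : ∀ j : Jᵒᵖ, Nonempty (F.obj j) := fun j => inferInstanceAs (Nonempty (Q j.unop))
  obtain ⟨u, hu⟩ := nonempty_sections_of_finite_inverse_system F
  exact ⟨fun i => u (Opposite.op i), fun i j hij => hu (Quiver.Hom.op (homOfLE hij))⟩

section Core

variable {J : Type*} [Preorder J] [IsDirected J (· ≤ ·)] [Nonempty J]
    (P : J → Type*) [∀ i, Group (P i)] [∀ i, Finite (P i)]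
    (f : ∀ {i j : J}, i ≤ j → (P j →* P i))
    (hf_id : ∀ i : J, f (le_refl i) = MonoidHom.id (P i))
    (hf_comp : ∀ {i j k : J} (hij : i ≤ j) (hjk : j ≤ k),
      (f hij).comp (f hjk) = f (hij.trans hjk))
    (hf_surj : ∀ {i j : J} (hij : i ≤ j), Function.Surjective (f hij))
    (G : Subgroup (∀ i, P i))
    (hG : (G : Set (∀ i, P i)) = {x | ∀ (i j : J) (hij : i ≤ j), f hij (x j) = x i})

include hG in
lemma mem_G_iff (x : ∀ i, P i) :
    x ∈ G ↔ ∀ (i j : J) (hij : i ≤ j), f hij (x j) = x i := by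
  rw [← SetLike.mem_coe, hG]; rfl

include hf_id hf_comp hf_surj hG in
lemma proj_surj (i : J) (a : P i) : ∃ x : ∀ j, P j, x ∈ G ∧ x i = a := by
  let Q : J → Type _ := fun j => {y : P j // ∀ hij : i ≤ j, f hij y = a}
  haveI : ∀ j, Nonempty (Q j) := by
    intro j
    obtain ⟨m, him, hjm⟩ := directed_of (· ≤ ·) i j
    obtain ⟨z, hz⟩ := hf_surj him a
    refine ⟨⟨f hjm z, fun hij => ?_⟩⟩
    rw [show f hij (f hjm z) = f (hij.trans hjm) z from DFunLike.congr_fun (hf_comp hij hjm) z]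
    exact hz
  haveI : ∀ j, Finite (Q j) := fun j => Subtype.finite
  obtain ⟨x, hx⟩ := exists_section' (Q := Q)
    (fun j j' hjj' y => ⟨f hjj' y.1, fun hij => by
      rw [show f hij (f hjj' y.1) = f (hij.trans hjj') y.1 from
        DFunLike.congr_fun (hf_comp hij hjj') y.1]
      exact y.2 _⟩)
    (fun j y => Subtype.ext (by show f (le_refl j) y.1 = y.1; rw [hf_id j]; rfl))
    (fun j j' j'' h1 h2 y => Subtype.ext (by
      show f h1 (f h2 y.1) = f (h1.trans h2) y.1
      exact DFunLike.congr_fun (hf_comp h1 h2) y.1))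
  refine ⟨fun j => (x j).1, (mem_G_iff P f G hG _).mpr
    (fun i' j hij => congrArg Subtype.val (hx hij)), ?_⟩
  have := (x i).2 (le_refl i)
  rwa [hf_id] at this

end Core

section Core2
variable {J : Type*} [Preorder J] [IsDirected J (· ≤ ·)] [Nonempty J]
    (P : J → Type*) [∀ i, Group (P i)] [∀ i, Finite (P i)]
    [∀ i, TopologicalSpace (P i)] [∀ i, DiscreteTopology (P i)]
    (f : ∀ {i j : J}, i ≤ j → (P j →* P i))
    (hf_id : ∀ i : J, f (le_refl i) = MonoidHom.id (P i))
    (hf_comp : ∀ {i j k : J} (hij : i ≤ j) (hjk : j ≤ k),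
      (f hij).comp (f hjk) = f (hij.trans hjk))
    (hf_surj : ∀ {i j : J} (hij : i ≤ j), Function.Surjective (f hij))
    (G : Subgroup (∀ i, P i))
    (hG : (G : Set (∀ i, P i)) = {x | ∀ (i j : J) (hij : i ≤ j), f hij (x j) = x i})

include hf_id hf_comp hf_surj hG in
lemma core_lower : ⨆ i, NCC (P i) ≤ NCCtop ↥G := by
  refine iSup_le fun i => ?_
  rcases eq_or_ne (NCCtop ↥G) ⊤ with htop | htop
  · simp [htop]
  obtain ⟨n, hn⟩ : ∃ n : ℕ, NCCtop ↥G = n := by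
    lift NCCtop ↥G to ℕ using htop with n hn
    exact ⟨n, rfl⟩
  obtain ⟨s, hcard, hc⟩ := NCCtop_exists_cover (G := ↥G) (n := n) hn.le
  classical
  -- the coordinate projection
  let π : ↥G →* P i := (Pi.evalMonoidHom P i).comp G.subtype
  have hπcont : Continuous π := (continuous_apply i).comp continuous_subtype_val
  refine le_trans (le_trans (NCC_le (P i) (s.image π) ?_) ?_) hn.ge
  · intro y
    obtain ⟨x, hxG, hxi⟩ := proj_surj P f hf_id hf_comp hf_surj G hG i y
    obtain ⟨g, hg, h, hx⟩ := hc ⟨x, hxG⟩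
    refine ⟨π g, Finset.mem_image_of_mem π hg, π h, ?_⟩
    have h1 : π ⟨x, hxG⟩ ∈ π '' closure
        ((Subgroup.zpowers (h * g * h⁻¹) : Subgroup ↥G) : Set ↥G) :=
      Set.mem_image_of_mem π hx
    have h2 := image_closure_subset_closure_image (f := π)
      (s := ((Subgroup.zpowers (h * g * h⁻¹) : Subgroup ↥G) : Set ↥G)) hπcont h1
    rw [closure_discrete] at h2
    have h3 : π '' ((Subgroup.zpowers (h * g * h⁻¹) : Subgroup ↥G) : Set ↥G)
        = ((Subgroup.zpowers (π h * π g * (π h)⁻¹) : Subgroup (P i)) : Set (P i)) := by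
      rw [← Subgroup.coe_map, MonoidHom.map_zpowers, map_mul, map_mul, map_inv]
    rw [h3] at h2
    have : π ⟨x, hxG⟩ = y := hxi
    rwa [this] at h2
  · exact_mod_cast Nat.cast_le.mpr (le_trans (Finset.card_image_le) hcard)
end Core2

section Core3
variable {J : Type*} [Preorder J] [IsDirected J (· ≤ ·)] [Nonempty J]
    (P : J → Type*) [∀ i, Group (P i)] [∀ i, Finite (P i)]
    [∀ i, TopologicalSpace (P i)] [∀ i, DiscreteTopology (P i)]
    (f : ∀ {i j : J}, i ≤ j → (P j →* P i))
    (hf_id : ∀ i : J, f (le_refl i) = MonoidHom.id (P i))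
    (hf_comp : ∀ {i j k : J} (hij : i ≤ j) (hjk : j ≤ k),
      (f hij).comp (f hjk) = f (hij.trans hjk))
    (hf_surj : ∀ {i j : J} (hij : i ≤ j), Function.Surjective (f hij))
    (G : Subgroup (∀ i, P i))
    (hG : (G : Set (∀ i, P i)) = {x | ∀ (i j : J) (hij : i ≤ j), f hij (x j) = x i})

include hf_id hf_comp hf_surj hG in
lemma core_upper : NCCtop ↥G ≤ ⨆ i, NCC (P i) := by
  classical
  rcases eq_or_ne (⨆ i, NCC (P i)) ⊤ with htop | htop
  · simp [htop]
  obtain ⟨n, hn⟩ : ∃ n : ℕ, (⨆ i, NCC (P i)) = n := by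
    lift (⨆ i, NCC (P i)) to ℕ using htop with n hn
    exact ⟨n, rfl⟩
  -- pick a covering tuple at each level
  have hcov : ∀ i : J, ∃ v : Fin n → P i,
      ∀ x : P i, ∃ (k : Fin n) (h : P i), x ∈ Subgroup.zpowers (h * v k * h⁻¹) := by
    intro i
    have hle : NCC (P i) ≤ (n : ℕ∞) := hn ▸ le_iSup (fun i => NCC (P i)) i
    obtain ⟨s, hcard, hc⟩ := NCC_exists_cover hle
    refine ⟨fun k => (s.toList).getD k 1, fun x => ?_⟩
    obtain ⟨g, hg, h, hx⟩ := hc x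
    rw [← Finset.mem_toList, List.mem_iff_getElem] at hg
    obtain ⟨m, hm, hms⟩ := hg
    have hmn : m < n := lt_of_lt_of_le hm (by rw [Finset.length_toList]; exact hcard)
    refine ⟨⟨m, hmn⟩, h, ?_⟩
    show x ∈ Subgroup.zpowers (h * s.toList.getD m 1 * h⁻¹)
    rw [show s.toList.getD m 1 = g by rw [List.getD_eq_getElem _ _ hm]; exact hms]
    exact hx
  -- the system of covering tuples
  let Q : J → Type _ := fun i => {v : Fin n → P i //
    ∀ x : P i, ∃ (k : Fin n) (h : P i), x ∈ Subgroup.zpowers (h * v k * h⁻¹)}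
  haveI : ∀ i, Nonempty (Q i) := fun i => by
    obtain ⟨v, hv⟩ := hcov i; exact ⟨⟨v, hv⟩⟩
  haveI : ∀ i, Finite (Q i) := fun i => Subtype.finite
  obtain ⟨v, hv⟩ := exists_section' (Q := Q)
    (fun i j hij w => ⟨fun k => f hij (w.1 k), fun x => by
      obtain ⟨y, hy⟩ := hf_surj hij x
      obtain ⟨k, h, hmem⟩ := w.2 y
      obtain ⟨m, hm⟩ := Subgroup.mem_zpowers_iff.mp hmem
      refine ⟨k, f hij h, Subgroup.mem_zpowers_iff.mpr ⟨m, ?_⟩⟩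
      rw [← map_inv, ← map_mul, ← map_mul, ← map_zpow, hm, hy]⟩)
    (fun i w => Subtype.ext (funext fun k => by
      show f (le_refl i) (w.1 k) = w.1 k; rw [hf_id]; rfl))
    (fun i j k h1 h2 w => Subtype.ext (funext fun l => by
      show f h1 (f h2 (w.1 l)) = f (h1.trans h2) (w.1 l)
      exact DFunLike.congr_fun (hf_comp h1 h2) (w.1 l)))
  -- the generators in G
  have hgmem : ∀ k : Fin n, (fun i => (v i).1 k) ∈ G := by
    intro k
    refine (mem_G_iff P f G hG _).mpr fun i j hij => ?_
    exact congrFun (congrArg Subtype.val (hv hij)) k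
  let gg : Fin n → ↥G := fun k => ⟨fun i => (v i).1 k, hgmem k⟩
  have hle : NCCtop ↥G ≤ ((Finset.univ.image gg).card : ℕ∞) := by
    refine NCCtop_le ↥G (Finset.univ.image gg) fun x => ?_
    -- compatible choice of (index, conjugator)
    have hxc : ∀ (i j : J) (hij : i ≤ j), f hij (x.1 j) = x.1 i :=
      (mem_G_iff P f G hG x.1).mp x.2
    let Q' : J → Type _ := fun i => {p : Fin n × P i //
      x.1 i ∈ Subgroup.zpowers (p.2 * (v i).1 p.1 * p.2⁻¹)}
    haveI : ∀ i, Nonempty (Q' i) := fun i => by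
      obtain ⟨k, h, hm⟩ := (v i).2 (x.1 i); exact ⟨⟨(k, h), hm⟩⟩
    haveI : ∀ i, Finite (Q' i) := fun i => Subtype.finite
    obtain ⟨w, hw⟩ := exists_section' (Q := Q')
      (fun i j hij p => ⟨(p.1.1, f hij p.1.2), by
        obtain ⟨m, hm⟩ := Subgroup.mem_zpowers_iff.mp p.2
        refine Subgroup.mem_zpowers_iff.mpr ⟨m, ?_⟩
        show ((f hij p.1.2) * (v i).1 p.1.1 * (f hij p.1.2)⁻¹) ^ m = x.1 i
        rw [show (v i).1 p.1.1 = f hij ((v j).1 p.1.1) from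
          (congrFun (congrArg Subtype.val (hv hij)) p.1.1).symm]
        rw [← map_inv, ← map_mul, ← map_mul, ← map_zpow, hm, hxc i j hij]⟩)
      (fun i p => Subtype.ext (by
        show ((p.1.1, f (le_refl i) p.1.2) : Fin n × P i) = p.1
        rw [hf_id]; rfl))
      (fun i j k h1 h2 p => Subtype.ext (by
        exact congrArg (Prod.mk p.1.1) (DFunLike.congr_fun (hf_comp h1 h2) p.1.2)))
    -- the Fin n component is constant
    obtain ⟨i₀⟩ := ‹Nonempty J›
    set k : Fin n := (w i₀).1.1 with hk
    have hkconst : ∀ i : J, (w i).1.1 = k := by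
      intro i
      obtain ⟨m, him, hi0m⟩ := directed_of (· ≤ ·) i i₀
      have e1 : (w i).1.1 = (w m).1.1 := by
        rw [← hw him]
      have e2 : (w i₀).1.1 = (w m).1.1 := by
        rw [← hw hi0m]
      rw [e1, hk, e2]
    -- the conjugator in G
    have hhmem : (fun i => (w i).1.2) ∈ G := by
      refine (mem_G_iff P f G hG _).mpr fun i j hij => ?_
      have := congrArg (fun q => q.1.2) (hw hij)
      exact this
    let h : ↥G := ⟨fun i => (w i).1.2, hhmem⟩
    refine ⟨gg k, Finset.mem_image_of_mem gg (Finset.mem_univ k), h, ?_⟩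
    rw [mem_closure_iff]
    intro o ho hxo
    obtain ⟨u, hu, rfl⟩ := isOpen_induced_iff.mp ho
    obtain ⟨I, u', hI, hsub⟩ := isOpen_pi_iff.mp hu x.1 hxo
    obtain ⟨j, hj⟩ := Finset.exists_le I
    -- at level j we find the exponent
    have hxj : x.1 j ∈ Subgroup.zpowers (h.1 j * (gg k).1 j * (h.1 j)⁻¹) := by
      have := (w j).2
      rwa [hkconst j] at this
    obtain ⟨m, hm⟩ := Subgroup.mem_zpowers_iff.mp hxj
    refine ⟨(h * gg k * h⁻¹) ^ m, ?_, Subgroup.mem_zpowers_iff.mpr ⟨m, rfl⟩⟩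
    show (((h * gg k * h⁻¹) ^ m : ↥G) : ∀ i, P i) ∈ u
    have hyj : ∀ a : J, a ≤ j →
        (((h * gg k * h⁻¹) ^ m : ↥G) : ∀ i, P i) a = x.1 a := by
      intro a haj
      have hyG := ((h * gg k * h⁻¹) ^ m : ↥G).2
      have hyc := (mem_G_iff P f G hG _).mp hyG a j haj
      have hcoord : (((h * gg k * h⁻¹) ^ m : ↥G) : ∀ i, P i) j = x.1 j := by
        have : (((h * gg k * h⁻¹) ^ m : ↥G) : ∀ i, P i) j
            = (h.1 j * (gg k).1 j * (h.1 j)⁻¹) ^ m := rfl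
        rw [this, hm]
      rw [← hyc, hcoord, hxc a j haj]
    apply hsub
    intro a ha
    rw [hyj a (hj a ha)]
    exact (hI a ha).2
  refine le_trans hle (le_trans ?_ hn.ge)
  exact_mod_cast le_trans (Finset.card_image_le) (by simp)
end Core3

lemma NCCtop_le_of_iso {G₁ G₂ : Type*} [Group G₁] [TopologicalSpace G₁]
    [Group G₂] [TopologicalSpace G₂] (e : G₁ ≃* G₂) (he : Continuous e)
    (he' : Continuous e.symm) : NCCtop G₂ ≤ NCCtop G₁ := by
  classical
  rcases eq_or_ne (NCCtop G₁) ⊤ with htop | htop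
  · simp [htop]
  obtain ⟨n, hn⟩ : ∃ n : ℕ, NCCtop G₁ = n := by
    lift NCCtop G₁ to ℕ using htop with n hn
    exact ⟨n, rfl⟩
  obtain ⟨s, hcard, hc⟩ := NCCtop_exists_cover (G := G₁) (n := n) hn.le
  let homeo : G₁ ≃ₜ G₂ := ⟨e.toEquiv, he, he'⟩
  have key : ∀ x : G₂, ∃ g ∈ s.image e, ∃ h : G₂,
      x ∈ closure ((Subgroup.zpowers (h * g * h⁻¹) : Subgroup G₂) : Set G₂) := by
    intro x
    obtain ⟨g, hg, h, hx⟩ := hc (e.symm x)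
    refine ⟨e g, Finset.mem_image_of_mem e hg, e h, ?_⟩
    have h1 : x ∈ homeo '' closure ((Subgroup.zpowers (h * g * h⁻¹) : Subgroup G₁) : Set G₁) :=
      ⟨e.symm x, hx, e.apply_symm_apply x⟩
    rw [homeo.image_closure] at h1
    have h2 : (homeo : G₁ → G₂) '' ((Subgroup.zpowers (h * g * h⁻¹) : Subgroup G₁) : Set G₁)
        = ((Subgroup.zpowers (e h * e g * (e h)⁻¹) : Subgroup G₂) : Set G₂) := by
      show ⇑e.toMonoidHom '' _ = _
      rw [← Subgroup.coe_map, MonoidHom.map_zpowers, map_mul, map_mul, map_inv]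
      rfl
    rwa [h2] at h1
  calc NCCtop G₂ ≤ ((s.image e).card : ℕ∞) := NCCtop_le G₂ _ key
    _ ≤ (n : ℕ∞) := by exact_mod_cast le_trans Finset.card_image_le hcard
    _ = NCCtop G₁ := hn.symm

lemma NCCtop_eq_of_iso {G₁ G₂ : Type*} [Group G₁] [TopologicalSpace G₁]
    [Group G₂] [TopologicalSpace G₂] (e : G₁ ≃* G₂) (he : Continuous e)
    (he' : Continuous e.symm) : NCCtop G₁ = NCCtop G₂ :=
  le_antisymm (NCCtop_le_of_iso e.symm he' (by simpa using he)) (NCCtop_le_of_iso e he he')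

lemma exists_onns {H : Type*} [Group H] [TopologicalSpace H] [IsTopologicalGroup H]
    [CompactSpace H] [T2Space H] [TotallyDisconnectedSpace H] {x : H} (hx : x ≠ 1) :
    ∃ N : OpenNormalSubgroup H, x ∉ N := by
  haveI : TotallySeparatedSpace H := loc_compact_t2_tot_disc_iff_tot_sep.mp inferInstance
  obtain ⟨u, v, hu, hv, h1u, hxv, hcov, hdisj⟩ :=
    TotallySeparatedSpace.isTotallySeparated_univ (Set.mem_univ (1 : H)) (Set.mem_univ x) hx.symm
  have hucl : IsClosed u := by
    rw [← isOpen_compl_iff]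
    have : uᶜ = v := by
      apply Set.Subset.antisymm
      · intro a ha
        rcases hcov (Set.mem_univ a) with h | h
        · exact absurd h ha
        · exact h
      · intro a ha hau
        exact Set.disjoint_left.mp hdisj hau ha
    rw [this]; exact hv
  obtain ⟨N, hN⟩ := IsTopologicalGroup.exist_openNormalSubgroup_sub_clopen_nhds_of_one
    ⟨hucl, hu⟩ h1u
  exact ⟨N, fun hxN => Set.disjoint_left.mp hdisj (hN hxN) hxv⟩

lemma profinite_NCC (H : Type) [Group H] [TopologicalSpace H] [IsTopologicalGroup H]
    [CompactSpace H] [T2Space H] [TotallyDisconnectedSpace H] :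
    NCCtop H = ⨆ (N : Subgroup H) (_ : IsOpen (N : Set H)) (hN : N.Normal),
      @NCC (H ⧸ N) (@QuotientGroup.Quotient.group H _ N hN) := by
  classical
  let J := (OpenNormalSubgroup H)ᵒᵈ
  haveI : IsDirected J (· ≤ ·) := ⟨fun a b => by
    refine ⟨OrderDual.toDual (OrderDual.ofDual a ⊓ OrderDual.ofDual b), ?_, ?_⟩
    · show OrderDual.ofDual a ⊓ OrderDual.ofDual b ≤ OrderDual.ofDual a
      exact inf_le_left
    · show OrderDual.ofDual a ⊓ OrderDual.ofDual b ≤ OrderDual.ofDual b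
      exact inf_le_right⟩
  haveI : Nonempty J := ⟨OrderDual.toDual ⟨⟨⊤, isOpen_univ⟩, inferInstance⟩⟩
  let P : J → Type _ := fun N => H ⧸ (OrderDual.ofDual N).toSubgroup
  haveI : ∀ i : J, Finite (P i) :=
    fun i => Subgroup.quotient_finite_of_isOpen _ (OrderDual.ofDual i).toOpenSubgroup.isOpen
  haveI : ∀ i : J, DiscreteTopology (P i) :=
    fun i => QuotientGroup.discreteTopology (OrderDual.ofDual i).toOpenSubgroup.isOpen
  have hle : ∀ {i j : J}, i ≤ j →
      (OrderDual.ofDual j).toSubgroup ≤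
        ((OrderDual.ofDual i).toSubgroup).comap (MonoidHom.id H) := by
    intro i j hij
    rw [Subgroup.comap_id]
    exact fun z hz => hij hz
  let f : ∀ {i j : J}, i ≤ j → (P j →* P i) :=
    fun {i j} hij => QuotientGroup.map _ _ (MonoidHom.id H) (hle hij)
  have hf_mk : ∀ {i j : J} (hij : i ≤ j) (x : H),
      f hij (QuotientGroup.mk x) = QuotientGroup.mk x := by
    intro i j hij x
    exact QuotientGroup.map_mk _ _ _ _ x
  have hf_id : ∀ i : J, f (le_refl i) = MonoidHom.id (P i) := by
    intro i
    refine MonoidHom.ext fun q => QuotientGroup.induction_on q fun x => ?_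
    rw [hf_mk (le_refl i) x]; rfl
  have hf_comp : ∀ {i j k : J} (hij : i ≤ j) (hjk : j ≤ k),
      (f hij).comp (f hjk) = f (hij.trans hjk) := by
    intro i j k hij hjk
    refine MonoidHom.ext fun q => QuotientGroup.induction_on q fun x => ?_
    show f hij (f hjk (QuotientGroup.mk x)) = f (hij.trans hjk) (QuotientGroup.mk x)
    rw [hf_mk hjk x, hf_mk hij x, hf_mk (hij.trans hjk) x]
  have hf_surj : ∀ {i j : J} (hij : i ≤ j), Function.Surjective (f hij) := by
    intro i j hij q
    refine QuotientGroup.induction_on q fun x => ⟨QuotientGroup.mk x, hf_mk hij x⟩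
  -- the inverse limit subgroup
  let G' : Subgroup (∀ i : J, P i) :=
    { carrier := {x | ∀ (i j : J) (hij : i ≤ j), f hij (x j) = x i}
      one_mem' := fun i j hij => by simp
      mul_mem' := fun {a b} ha hb i j hij => by
        rw [Pi.mul_apply, Pi.mul_apply, map_mul, ha i j hij, hb i j hij]
      inv_mem' := fun {a} ha i j hij => by
        rw [Pi.inv_apply, Pi.inv_apply, map_inv, ha i j hij] }
  have hG' : (G' : Set (∀ i : J, P i)) =
      {x | ∀ (i j : J) (hij : i ≤ j), f hij (x j) = x i} := rfl
  -- the isomorphism H ≃* G'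
  let θ : H →* ↥G' :=
    { toFun := fun x => ⟨fun i => QuotientGroup.mk x, fun i j hij => hf_mk hij x⟩
      map_one' := Subtype.ext (funext fun i => rfl)
      map_mul' := fun x y => Subtype.ext (funext fun i => rfl) }
  have hinj : Function.Injective θ := by
    rw [injective_iff_map_eq_one]
    intro x hx
    by_contra hx1
    obtain ⟨N, hN⟩ := exists_onns hx1
    have := congrArg Subtype.val hx
    have h2 := congrFun this (OrderDual.toDual N)
    exact hN ((QuotientGroup.eq_one_iff x).mp h2)
  have hsurj : Function.Surjective θ := by
    intro y
    let C : J → Set H := fun i => {z | (QuotientGroup.mk z : P i) = y.1 i}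
    have hdir : Directed (· ⊇ ·) C := by
      intro i j
      obtain ⟨k, hik, hjk⟩ := directed_of (· ≤ ·) i j
      refine ⟨k, fun z hz => ?_, fun z hz => ?_⟩
      · show (QuotientGroup.mk z : P i) = y.1 i
        rw [← y.2 i k hik, ← hz]
        exact (hf_mk hik z).symm
      · show (QuotientGroup.mk z : P j) = y.1 j
        rw [← y.2 j k hjk, ← hz]
        exact (hf_mk hjk z).symm
    have hne : ∀ i : J, (C i).Nonempty := by
      intro i
      obtain ⟨z, hz⟩ := QuotientGroup.mk'_surjective (OrderDual.ofDual i).toSubgroup (y.1 i)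
      exact ⟨z, hz⟩
    have hcl : ∀ i : J, IsClosed (C i) := by
      intro i
      have : C i = QuotientGroup.mk ⁻¹' {y.1 i} := rfl
      rw [this]
      exact (isClosed_singleton).preimage continuous_quotient_mk'
    obtain ⟨z, hz⟩ := IsCompact.nonempty_iInter_of_directed_nonempty_isCompact_isClosed
      C hdir hne (fun i => (hcl i).isCompact) hcl
    exact ⟨z, Subtype.ext (funext fun i => Set.mem_iInter.mp hz i)⟩
  let e : H ≃* ↥G' := MulEquiv.ofBijective θ ⟨hinj, hsurj⟩
  have hcont : Continuous e := by
    show Continuous (fun x : H => θ x)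
    exact Continuous.subtype_mk (continuous_pi fun i => continuous_quotient_mk') _
  let homeo := Continuous.homeoOfEquivCompactToT2 (f := e.toEquiv) hcont
  have hcont' : Continuous e.symm := homeo.symm.continuous
  have h1 : NCCtop H = NCCtop ↥G' := NCCtop_eq_of_iso e hcont hcont'
  have h2 : NCCtop ↥G' = ⨆ i : J, NCC (P i) :=
    le_antisymm (core_upper P (fun {i j} => f) hf_id hf_comp hf_surj G' hG')
      (core_lower P (fun {i j} => f) hf_id hf_comp hf_surj G' hG')
  rw [h1, h2]
  apply le_antisymm
  · refine iSup_le fun i => ?_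
    have hNn : ((OrderDual.ofDual i).toSubgroup).Normal := inferInstance
    refine le_iSup_of_le (OrderDual.ofDual i).toSubgroup ?_
    refine le_iSup_of_le (OrderDual.ofDual i).toOpenSubgroup.isOpen ?_
    exact le_iSup (fun hN => @NCC (H ⧸ _) (@QuotientGroup.Quotient.group H _ _ hN)) hNn
  · refine iSup_le fun N => iSup_le fun hopen => iSup_le fun hN => ?_
    exact le_iSup (fun i : J => NCC (P i)) (OrderDual.toDual ⟨⟨N, hopen⟩, hN⟩)

theorem stmt_15 {J : Type*} [Preorder J] [IsDirected J (· ≤ ·)] [Nonempty J]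
    (P : J → Type*) [∀ i, Group (P i)] [∀ i, Finite (P i)]
    [∀ i, TopologicalSpace (P i)] [∀ i, DiscreteTopology (P i)]
    (f : ∀ {i j : J}, i ≤ j → (P j →* P i))
    (hf_id : ∀ i : J, f (le_refl i) = MonoidHom.id (P i))
    (hf_comp : ∀ {i j k : J} (hij : i ≤ j) (hjk : j ≤ k),
      (f hij).comp (f hjk) = f (hij.trans hjk))
    (hf_surj : ∀ {i j : J} (hij : i ≤ j), Function.Surjective (f hij))
    (G : Subgroup (∀ i, P i))
    (hG : (G : Set (∀ i, P i)) = {x | ∀ (i j : J) (hij : i ≤ j), f hij (x j) = x i}) :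
    (NCCtop ↥G = ⨆ i, NCC (P i)) ∧
    ∀ (H : Type) (_ : Group H) (_ : TopologicalSpace H) (_ : IsTopologicalGroup H)
      (_ : CompactSpace H) (_ : T2Space H) (_ : TotallyDisconnectedSpace H),
      NCCtop H = ⨆ (N : Subgroup H) (_ : IsOpen (N : Set H)) (hN : N.Normal),
        @NCC (H ⧸ N) (@QuotientGroup.Quotient.group H _ N hN) := by
  constructor
  · exact le_antisymm
      (core_upper P (fun {i j} => f) hf_id hf_comp hf_surj G hG)
      (core_lower P (fun {i j} => f) hf_id hf_comp hf_surj G hG)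
  · intro H hg ht htg hc h2 htd
    exact @profinite_NCC H hg ht htg hc h2 htd
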